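/- Let G be a finite simple graph with a coloring φ : V(G) → {1,2,3,4}. For every edge e = {u,v} with φ(u) ≠ φ(v), letting {c,d} = {1,2,3,4} \ {φ(u),φ(v)}, define k_c(e) as the number of common neighbors w of u and v with φ(w) = c, and define y_e = k_c(e)·k_d(e). Then the sum of y_e over all edges e whose endpoints have distinct colors equals 6·s + t, where s is the number of colorful K₄'s in G and t is the number of colorful induced diamonds in G. -/

import Mathlib

/-- An induced diamond in `G`: four distinct vertices `a, b, c, d` such that all pairs
among them are edges of `G` except exactly the pair `{c, d}`. -/
def IsDiamond {V : Type*} (G : SimpleGraph V) (a b c d : V) : Prop :=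
  a ≠ b ∧ a ≠ c ∧ a ≠ d ∧ b ≠ c ∧ b ≠ d ∧ c ≠ d ∧
    G.Adj a b ∧ G.Adj a c ∧ G.Adj a d ∧ G.Adj b c ∧ G.Adj b d ∧ ¬ G.Adj c d

variable {V : Type*} [Fintype V] [DecidableEq V]

/-- `kcount G φ c u v` is the number of common neighbors `w` of `u` and `v` with
`φ w = c`. -/
def kcount (G : SimpleGraph V) [DecidableRel G.Adj] (φ : V → Fin 4) (c : Fin 4)
    (u v : V) : ℕ :=
  (Finset.univ.filter fun w => G.Adj u w ∧ G.Adj v w ∧ φ w = c).card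

/-- For a pair `u, v`, the product of `kcount` over the colors not in `{φ u, φ v}`;
when `φ u ≠ φ v` and `{c, d} = {1,2,3,4} \ {φ u, φ v}`, this is `k_c(e) · k_d(e)`. -/
def ypair (G : SimpleGraph V) [DecidableRel G.Adj] (φ : V → Fin 4) (u v : V) : ℕ :=
  ∏ c ∈ (Finset.univ \ {φ u, φ v}), kcount G φ c u v

theorem ypair_symm (G : SimpleGraph V) [DecidableRel G.Adj] (φ : V → Fin 4) (u v : V) :
    ypair G φ u v = ypair G φ v u := by
  unfold ypair
  rw [Finset.pair_comm (φ u) (φ v)]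
  refine Finset.prod_congr rfl fun c _ => ?_
  unfold kcount
  congr 1
  ext w
  simp only [Finset.mem_filter]
  tauto

/-- `y_e` as a function of the unordered edge `e`. -/
def yedge (G : SimpleGraph V) [DecidableRel G.Adj] (φ : V → Fin 4) : Sym2 V → ℕ :=
  Sym2.lift ⟨ypair G φ, ypair_symm G φ⟩


open Finset in
lemma card4 {α : Type*} [DecidableEq α] {a b c d : α} (h1 : a≠b) (h2 : a≠c) (h3 : a≠d)
    (h4 : b≠c) (h5 : b≠d) (h6 : c≠d) : ({a,b,c,d} : Finset α).card = 4 := by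
  rw [card_insert_of_notMem (by simp [h1, h2, h3]),
      card_insert_of_notMem (by simp [h4, h5]),
      card_insert_of_notMem (by simp [h6]), card_singleton]

lemma compl_pair : ∀ a b : Fin 4, a ≠ b → ∃ c d : Fin 4, c < d ∧ (Finset.univ \ {a,b}) = {c,d} := by
  decide

lemma pair_order {α : Type*} [LinearOrder α] {a b c d : α} (h : a = c ∨ a = d)
    (h' : b = c ∨ b = d) (h1 : a < b) (h2 : c < d) : a = c ∧ b = d := by
  rcases h with rfl|rfl <;> rcases h' with rfl|rfl
  · exact absurd h1 (lt_irrefl _)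
  · exact ⟨rfl, rfl⟩
  · exact absurd (h1.trans h2) (lt_irrefl _)
  · exact absurd h1 (lt_irrefl _)

open Finset in
lemma clique4 {V : Type*} (G : SimpleGraph V) {a b c d : V}
    (hab : G.Adj a b) (hac : G.Adj a c) (had : G.Adj a d) (hbc : G.Adj b c)
    (hbd : G.Adj b d) (hcd : G.Adj c d) [DecidableEq V] :
    G.IsClique (({a,b,c,d} : Finset V) : Set V) := by
  intro p hp q hq hne
  simp only [coe_insert, Set.mem_insert_iff, coe_singleton, Set.mem_singleton_iff] at hp hq
  rcases hp with rfl|rfl|rfl|rfl <;> rcases hq with rfl|rfl|rfl|rfl <;>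
    first
      | exact absurd rfl hne
      | assumption
      | exact hab.symm
      | exact hac.symm
      | exact had.symm
      | exact hbc.symm
      | exact hbd.symm
      | exact hcd.symm


lemma IsDiamond.swap_ab {V : Type*} {G : SimpleGraph V} {a b c d : V}
    (h : IsDiamond G a b c d) : IsDiamond G b a c d := by
  obtain ⟨h1, h2, h3, h4, h5, h6, h7, h8, h9, h10, h11, h12⟩ := h
  exact ⟨h1.symm, h4, h5, h2, h3, h6, h7.symm, h10, h11, h8, h9, h12⟩

lemma IsDiamond.swap_cd {V : Type*} {G : SimpleGraph V} {a b c d : V}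
    (h : IsDiamond G a b c d) : IsDiamond G a b d c := by
  obtain ⟨h1, h2, h3, h4, h5, h6, h7, h8, h9, h10, h11, h12⟩ := h
  exact ⟨h1, h3, h2, h5, h4, h6.symm, h7, h9, h8, h11, h10, fun h => h12 h.symm⟩

open Finset in
lemma ypair_eq_card (G : SimpleGraph V) [DecidableRel G.Adj] (φ : V → Fin 4)
    (u v : V) (h : φ u ≠ φ v) :
    ypair G φ u v = ((Finset.univ ×ˢ Finset.univ).filter fun p : V × V =>
      G.Adj u p.1 ∧ G.Adj v p.1 ∧ G.Adj u p.2 ∧ G.Adj v p.2 ∧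
      φ p.1 ≠ φ u ∧ φ p.1 ≠ φ v ∧ φ p.2 ≠ φ u ∧ φ p.2 ≠ φ v ∧ φ p.1 < φ p.2).card := by
  obtain ⟨c, d, hcd, hD⟩ := compl_pair (φ u) (φ v) h
  have hmemD : ∀ z : Fin 4, z ≠ φ u ∧ z ≠ φ v ↔ (z = c ∨ z = d) := by
    intro z
    constructor
    · intro hz
      have : z ∈ Finset.univ \ {φ u, φ v} := by simp [hz.1, hz.2]
      rw [hD] at this; simpa using this
    · intro hz
      have : z ∈ ({c, d} : Finset (Fin 4)) := by simpa using hz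
      rw [← hD] at this; simp at this; tauto
  unfold ypair
  rw [hD, Finset.prod_pair hcd.ne]
  unfold kcount
  rw [← Finset.card_product]
  congr 1
  ext p
  simp only [Finset.mem_product, mem_filter, mem_univ, true_and]
  constructor
  · rintro ⟨⟨h1, h2, h3⟩, h4, h5, h6⟩
    have hc := (hmemD c).mpr (Or.inl rfl)
    have hd := (hmemD d).mpr (Or.inr rfl)
    exact ⟨h1, h2, h4, h5, h3 ▸ hc.1, h3 ▸ hc.2, h6 ▸ hd.1, h6 ▸ hd.2, by rw [h3, h6]; exact hcd⟩
  · rintro ⟨h1, h2, h3, h4, h5, h6, h7, h8, h9⟩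
    have hp1 := (hmemD (φ p.1)).mp ⟨h5, h6⟩
    have hp2 := (hmemD (φ p.2)).mp ⟨h7, h8⟩
    obtain ⟨e1, e2⟩ := pair_order hp1 hp2 h9 hcd
    exact ⟨⟨h1, h2, e1⟩, h3, h4, e2⟩

open Finset in
lemma sum_edges (G : SimpleGraph V) [DecidableRel G.Adj] (φ : V → Fin 4) :
    2 * ∑ e ∈ G.edgeFinset.filter (fun e => ¬ (Sym2.map φ e).IsDiag), yedge G φ e
      = ∑ p ∈ (Finset.univ ×ˢ Finset.univ).filter
          (fun p : V × V => G.Adj p.1 p.2 ∧ φ p.1 ≠ φ p.2), ypair G φ p.1 p.2 := by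
  have hmap : ∀ p ∈ (Finset.univ ×ˢ Finset.univ).filter
      (fun p : V × V => G.Adj p.1 p.2 ∧ φ p.1 ≠ φ p.2),
      s(p.1, p.2) ∈ G.edgeFinset.filter (fun e => ¬ (Sym2.map φ e).IsDiag) := by
    intro p hp
    obtain ⟨a, b⟩ := p
    simp only [mem_filter, mem_product, mem_univ, true_and] at hp
    simp [SimpleGraph.mem_edgeFinset, Sym2.map_pair_eq, Sym2.isDiag_iff_proj_eq, hp.1, hp.2]
  rw [← Finset.sum_fiberwise_of_maps_to hmap (fun p => ypair G φ p.1 p.2), Finset.mul_sum]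
  refine Finset.sum_congr rfl ?_
  intro e he
  revert he
  induction e using Sym2.inductionOn with
  | hf u v =>
    intro he
    simp only [mem_filter, SimpleGraph.mem_edgeFinset, SimpleGraph.mem_edgeSet,
      Sym2.map_pair_eq, Sym2.isDiag_iff_proj_eq] at he
    obtain ⟨hadj, hne⟩ := he
    have hvne : u ≠ v := hadj.ne
    have hfib : ((Finset.univ ×ˢ Finset.univ).filter
        (fun p : V × V => G.Adj p.1 p.2 ∧ φ p.1 ≠ φ p.2)).filter
        (fun p => s(p.1, p.2) = s(u, v)) = {(u,v),(v,u)} := by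
      ext p
      simp only [mem_filter, mem_product, mem_univ, true_and, Sym2.eq_iff,
        mem_insert, mem_singleton]
      constructor
      · rintro ⟨-, (⟨h1, h2⟩ | ⟨h1, h2⟩)⟩
        · exact Or.inl (Prod.ext h1 h2)
        · exact Or.inr (Prod.ext h1 h2)
      · rintro (rfl | rfl)
        · exact ⟨⟨hadj, hne⟩, Or.inl ⟨rfl, rfl⟩⟩
        · exact ⟨⟨hadj.symm, Ne.symm hne⟩, Or.inr ⟨rfl, rfl⟩⟩
    rw [hfib, Finset.sum_pair (by simp [hvne] : ((u,v) : V × V) ≠ (v,u))]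
    have : yedge G φ s(u, v) = ypair G φ u v := rfl
    rw [this, ypair_symm G φ v u]
    ring


open Finset in
lemma sum_card_eq (G : SimpleGraph V) [DecidableRel G.Adj] (φ : V → Fin 4) :
    ∑ p ∈ (Finset.univ ×ˢ Finset.univ).filter
        (fun p : V × V => G.Adj p.1 p.2 ∧ φ p.1 ≠ φ p.2),
      ((Finset.univ ×ˢ Finset.univ).filter fun w : V × V =>
        G.Adj p.1 w.1 ∧ G.Adj p.2 w.1 ∧ G.Adj p.1 w.2 ∧ G.Adj p.2 w.2 ∧
        φ w.1 ≠ φ p.1 ∧ φ w.1 ≠ φ p.2 ∧ φ w.2 ≠ φ p.1 ∧ φ w.2 ≠ φ p.2 ∧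
        φ w.1 < φ w.2).card
    = (((Finset.univ ×ˢ Finset.univ) ×ˢ (Finset.univ ×ˢ Finset.univ)).filter
        (fun q : (V × V) × (V × V) =>
          (G.Adj q.1.1 q.1.2 ∧ φ q.1.1 ≠ φ q.1.2) ∧
            (G.Adj q.1.1 q.2.1 ∧ G.Adj q.1.2 q.2.1 ∧ G.Adj q.1.1 q.2.2 ∧ G.Adj q.1.2 q.2.2 ∧
             φ q.2.1 ≠ φ q.1.1 ∧ φ q.2.1 ≠ φ q.1.2 ∧ φ q.2.2 ≠ φ q.1.1 ∧ φ q.2.2 ≠ φ q.1.2 ∧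
             φ q.2.1 < φ q.2.2))).card := by
  rw [Finset.card_filter, Finset.sum_product, Finset.sum_filter]
  refine Finset.sum_congr rfl fun a _ => ?_
  by_cases h : G.Adj a.1 a.2 ∧ φ a.1 ≠ φ a.2
  · rw [if_pos h, Finset.card_filter]
    refine Finset.sum_congr rfl fun b _ => ?_
    simp [h.1, h.2]
  · rw [if_neg h]
    refine (Finset.sum_eq_zero fun b _ => ?_).symm
    rw [if_neg]
    exact fun hh => h hh.1

open Finset in
lemma K4_count (G : SimpleGraph V) [DecidableRel G.Adj] (φ : V → Fin 4) :
    (((Finset.univ ×ˢ Finset.univ) ×ˢ (Finset.univ ×ˢ Finset.univ)).filter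
      (fun q : (V × V) × (V × V) =>
        ((G.Adj q.1.1 q.1.2 ∧ φ q.1.1 ≠ φ q.1.2) ∧
          (G.Adj q.1.1 q.2.1 ∧ G.Adj q.1.2 q.2.1 ∧ G.Adj q.1.1 q.2.2 ∧ G.Adj q.1.2 q.2.2 ∧
           φ q.2.1 ≠ φ q.1.1 ∧ φ q.2.1 ≠ φ q.1.2 ∧ φ q.2.2 ≠ φ q.1.1 ∧ φ q.2.2 ≠ φ q.1.2 ∧
           φ q.2.1 < φ q.2.2)) ∧ G.Adj q.2.1 q.2.2)).card
    = ((Finset.univ.powersetCard 4).filter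
        (fun S : Finset V => G.IsClique (S : Set V) ∧ (S.image φ).card = 4)).card * 12 := by
  have h12 : ((Finset.univ ×ˢ Finset.univ : Finset (Fin 4 × Fin 4)).filter
      fun pq => pq.1 ≠ pq.2).card = 12 := by decide
  rw [← h12, ← Finset.card_product]
  apply Finset.card_nbij
    (i := fun q : (V × V) × (V × V) =>
      (({q.1.1, q.1.2, q.2.1, q.2.2} : Finset V), (φ q.1.1, φ q.1.2)))
  · -- maps to
    rintro ⟨⟨u, v⟩, x, y⟩ hq
    simp only [Finset.mem_coe, mem_filter, mem_product, mem_univ, true_and] at hq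
    obtain ⟨⟨⟨hA, hcuv⟩, hux, hvx, huy, hvy, hcxu, hcxv, hcyu, hcyv, hlt⟩, hxy⟩ := hq
    have hcxy : φ x ≠ φ y := hlt.ne
    have h1 : u ≠ v := hA.ne
    have h2 : u ≠ x := fun h => hcxu (congrArg φ h.symm)
    have h3 : u ≠ y := fun h => hcyu (congrArg φ h.symm)
    have h4 : v ≠ x := fun h => hcxv (congrArg φ h.symm)
    have h5 : v ≠ y := fun h => hcyv (congrArg φ h.symm)
    have h6 : x ≠ y := fun h => hcxy (congrArg φ h)
    simp only [Finset.mem_coe, mem_product, mem_filter, Finset.mem_powersetCard_univ, mem_univ, true_and]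
    refine ⟨⟨card4 h1 h2 h3 h4 h5 h6, clique4 G hA hux huy hvx hvy hxy, ?_⟩, hcuv⟩
    have himg : ({u, v, x, y} : Finset V).image φ = {φ u, φ v, φ x, φ y} := by
      simp [Finset.image_insert]
    rw [himg]
    exact card4 hcuv (Ne.symm hcxu) (Ne.symm hcyu) (Ne.symm hcxv) (Ne.symm hcyv) hcxy
  · -- injective
    rintro ⟨⟨u, v⟩, x, y⟩ hq ⟨⟨u', v'⟩, x', y'⟩ hq' heq
    simp only [Finset.coe_filter, Set.mem_setOf_eq, mem_product, mem_univ, true_and] at hq hq'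
    obtain ⟨⟨⟨hA, hcuv⟩, hux, hvx, huy, hvy, hcxu, hcxv, hcyu, hcyv, hlt⟩, hxy⟩ := hq
    obtain ⟨⟨⟨hA', hcuv'⟩, hux', hvx', huy', hvy', hcxu', hcxv', hcyu', hcyv', hlt'⟩, hxy'⟩ := hq'
    simp only [Prod.mk.injEq] at heq
    obtain ⟨hS, hpu, hpv⟩ := heq
    -- resolve u'
    have hu' : u' ∈ ({u, v, x, y} : Finset V) := by rw [hS]; simp
    simp only [mem_insert, mem_singleton] at hu'
    have heu : u' = u := by
      rcases hu' with h|h|h|h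
      · exact h
      · rw [h] at hpu; exact absurd hpu hcuv
      · rw [h] at hpu; exact absurd hpu.symm hcxu
      · rw [h] at hpu; exact absurd hpu.symm hcyu
    have hv' : v' ∈ ({u, v, x, y} : Finset V) := by rw [hS]; simp
    simp only [mem_insert, mem_singleton] at hv'
    have hev : v' = v := by
      rcases hv' with h|h|h|h
      · rw [h] at hpv; exact absurd hpv.symm hcuv
      · exact h
      · rw [h] at hpv; exact absurd hpv.symm hcxv
      · rw [h] at hpv; exact absurd hpv.symm hcyv
    have hx' : x' ∈ ({u, v, x, y} : Finset V) := by rw [hS]; simp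
    simp only [mem_insert, mem_singleton] at hx'
    have hy' : y' ∈ ({u, v, x, y} : Finset V) := by rw [hS]; simp
    simp only [mem_insert, mem_singleton] at hy'
    have hx'' : x' = x ∨ x' = y := by
      rcases hx' with h|h|h|h
      · exact absurd ((congrArg φ h).trans hpu) hcxu'
      · exact absurd ((congrArg φ h).trans hpv) hcxv'
      · exact Or.inl h
      · exact Or.inr h
    have hy'' : y' = x ∨ y' = y := by
      rcases hy' with h|h|h|h
      · exact absurd ((congrArg φ h).trans hpu) hcyu'
      · exact absurd ((congrArg φ h).trans hpv) hcyv'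
      · exact Or.inl h
      · exact Or.inr h
    have hex : x' = x ∧ y' = y := by
      rcases hx'' with h1|h1 <;> rcases hy'' with h2|h2
      · rw [h1, h2] at hlt'; exact absurd hlt' (lt_irrefl _)
      · exact ⟨h1, h2⟩
      · rw [h1, h2] at hlt'; exact absurd hlt' (lt_asymm hlt)
      · rw [h1, h2] at hlt'; exact absurd hlt' (lt_irrefl _)
    simp [Prod.ext_iff, heu, hev, hex.1, hex.2]
  · -- surjective
    rintro ⟨S, p, q⟩ hb
    simp only [Finset.coe_product, Set.mem_prod, Finset.mem_coe, mem_filter,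
      Finset.mem_powersetCard_univ, mem_product, mem_univ, true_and] at hb
    obtain ⟨⟨hS4, hclq, himg⟩, hpq⟩ := hb
    have hinj : Set.InjOn φ ↑S := Finset.card_image_iff.mp (himg.trans hS4.symm)
    have himgu : S.image φ = Finset.univ := Finset.eq_univ_of_card _ (by simp [himg])
    have hp' : p ∈ S.image φ := by rw [himgu]; exact mem_univ p
    have hq' : q ∈ S.image φ := by rw [himgu]; exact mem_univ q
    obtain ⟨u, hu, hφu⟩ := Finset.mem_image.mp hp'
    obtain ⟨v, hv, hφv⟩ := Finset.mem_image.mp hq'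
    have huv : u ≠ v := fun h => hpq (by rw [← hφu, ← hφv, h])
    have hsub : ({u, v} : Finset V) ⊆ S := by
      intro z hz; simp only [mem_insert, mem_singleton] at hz
      rcases hz with rfl|rfl; exacts [hu, hv]
    have hcard2 : (S \ {u, v}).card = 2 := by
      rw [Finset.card_sdiff_of_subset hsub, hS4, Finset.card_pair huv]
    obtain ⟨x0, y0, hxy0, hset0⟩ := Finset.card_eq_two.mp hcard2
    have hx0 : x0 ∈ S ∧ x0 ≠ u ∧ x0 ≠ v := by
      have : x0 ∈ S \ {u, v} := by rw [hset0]; simp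
      simpa using this
    have hy0 : y0 ∈ S ∧ y0 ≠ u ∧ y0 ≠ v := by
      have : y0 ∈ S \ {u, v} := by rw [hset0]; simp
      simpa using this
    have hφxy0 : φ x0 ≠ φ y0 := hinj.ne hx0.1 hy0.1 hxy0
    obtain ⟨x, y, hx, hy, hxlt, hpset⟩ :
        ∃ x y, (x ∈ S ∧ x ≠ u ∧ x ≠ v) ∧ (y ∈ S ∧ y ≠ u ∧ y ≠ v) ∧
          φ x < φ y ∧ S \ {u, v} = {x, y} := by
      rcases lt_or_gt_of_ne hφxy0 with h|h
      · exact ⟨x0, y0, hx0, hy0, h, hset0⟩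
      · exact ⟨y0, x0, hy0, hx0, h, by rw [hset0, Finset.pair_comm]⟩
    have hSeq : S = {u, v, x, y} := by
      have h1 : ({u, v} : Finset V) ∪ (S \ {u, v}) = S := Finset.union_sdiff_of_subset hsub
      rw [← h1, hpset]
      ext z; simp only [mem_union, mem_insert, mem_singleton]; tauto
    have hxu : x ≠ u := hx.2.1
    have hxv : x ≠ v := hx.2.2
    have hyu : y ≠ u := hy.2.1
    have hyv : y ≠ v := hy.2.2
    have hxy : x ≠ y := fun h => (hxlt.ne) (congrArg φ h)
    have adj : ∀ a b : V, a ∈ S → b ∈ S → a ≠ b → G.Adj a b := fun a b ha hb hne =>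
      hclq (Finset.mem_coe.mpr ha) (Finset.mem_coe.mpr hb) hne
    refine ⟨((u, v), (x, y)), ?_, ?_⟩
    · simp only [Finset.mem_coe, mem_filter, mem_product, mem_univ, true_and]
      refine ⟨⟨⟨adj u v hu hv huv, fun h => hpq (by rw [← hφu, ← hφv, h])⟩,
        adj u x hu hx.1 (Ne.symm hxu), adj v x hv hx.1 (Ne.symm hxv),
        adj u y hu hy.1 (Ne.symm hyu), adj v y hv hy.1 (Ne.symm hyv),
        hinj.ne hx.1 hu hxu, hinj.ne hx.1 hv hxv,
        hinj.ne hy.1 hu hyu, hinj.ne hy.1 hv hyv, hxlt⟩,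
        adj x y hx.1 hy.1 hxy⟩
    · simp only [Prod.mk.injEq]
      exact ⟨hSeq.symm, hφu, hφv⟩

open Finset Classical in
lemma dia_count (G : SimpleGraph V) [DecidableRel G.Adj] (φ : V → Fin 4) :
    (((Finset.univ ×ˢ Finset.univ) ×ˢ (Finset.univ ×ˢ Finset.univ)).filter
      (fun q : (V × V) × (V × V) =>
        ((G.Adj q.1.1 q.1.2 ∧ φ q.1.1 ≠ φ q.1.2) ∧
          (G.Adj q.1.1 q.2.1 ∧ G.Adj q.1.2 q.2.1 ∧ G.Adj q.1.1 q.2.2 ∧ G.Adj q.1.2 q.2.2 ∧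
           φ q.2.1 ≠ φ q.1.1 ∧ φ q.2.1 ≠ φ q.1.2 ∧ φ q.2.2 ≠ φ q.1.1 ∧ φ q.2.2 ≠ φ q.1.2 ∧
           φ q.2.1 < φ q.2.2)) ∧ ¬ G.Adj q.2.1 q.2.2)).card
    = ((Finset.univ.powersetCard 4).filter
        (fun S : Finset V => (∃ a b c d, S = {a, b, c, d} ∧ IsDiamond G a b c d) ∧
          (S.image φ).card = 4)).card * 2 := by
  have h2 : (Finset.univ : Finset Bool).card = 2 := by decide
  rw [← h2, ← Finset.card_product]
  apply Finset.card_nbij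
    (i := fun q : (V × V) × (V × V) =>
      (({q.1.1, q.1.2, q.2.1, q.2.2} : Finset V), decide (φ q.1.1 < φ q.1.2)))
  · -- maps to
    rintro ⟨⟨u, v⟩, x, y⟩ hq
    simp only [Finset.mem_coe, mem_filter, mem_product, mem_univ, true_and] at hq
    obtain ⟨⟨⟨hA, hcuv⟩, hux, hvx, huy, hvy, hcxu, hcxv, hcyu, hcyv, hlt⟩, hxy⟩ := hq
    have hcxy : φ x ≠ φ y := hlt.ne
    have h1 : u ≠ v := hA.ne
    have h2 : u ≠ x := fun h => hcxu (congrArg φ h.symm)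
    have h3 : u ≠ y := fun h => hcyu (congrArg φ h.symm)
    have h4 : v ≠ x := fun h => hcxv (congrArg φ h.symm)
    have h5 : v ≠ y := fun h => hcyv (congrArg φ h.symm)
    have h6 : x ≠ y := fun h => hcxy (congrArg φ h)
    simp only [Finset.mem_coe, mem_product, mem_filter, Finset.mem_powersetCard_univ, mem_univ, true_and,
      and_true]
    refine ⟨card4 h1 h2 h3 h4 h5 h6,
      ⟨u, v, x, y, rfl, h1, h2, h3, h4, h5, h6, hA, hux, huy, hvx, hvy, hxy⟩, ?_⟩
    have himg : ({u, v, x, y} : Finset V).image φ = {φ u, φ v, φ x, φ y} := by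
      simp [Finset.image_insert]
    rw [himg]
    exact card4 hcuv (Ne.symm hcxu) (Ne.symm hcyu) (Ne.symm hcxv) (Ne.symm hcyv) hcxy
  · -- injective
    rintro ⟨⟨u, v⟩, x, y⟩ hq ⟨⟨u', v'⟩, x', y'⟩ hq' heq
    simp only [Finset.coe_filter, Set.mem_setOf_eq, mem_product, mem_univ, true_and] at hq hq'
    obtain ⟨⟨⟨hA, hcuv⟩, hux, hvx, huy, hvy, hcxu, hcxv, hcyu, hcyv, hlt⟩, hxy⟩ := hq
    obtain ⟨⟨⟨hA', hcuv'⟩, hux', hvx', huy', hvy', hcxu', hcxv', hcyu', hcyv', hlt'⟩, hxy'⟩ := hq'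
    simp only [Prod.mk.injEq] at heq
    obtain ⟨hS, hbit⟩ := heq
    -- memberships of primed vertices in unprimed set and vice versa
    have hu' : u' ∈ ({u, v, x, y} : Finset V) := by rw [hS]; simp
    have hv' : v' ∈ ({u, v, x, y} : Finset V) := by rw [hS]; simp
    have hx' : x' ∈ ({u, v, x, y} : Finset V) := by rw [hS]; simp
    have hy' : y' ∈ ({u, v, x, y} : Finset V) := by rw [hS]; simp
    have hxmem : x ∈ ({u', v', x', y'} : Finset V) := by rw [← hS]; simp
    have hymem : y ∈ ({u', v', x', y'} : Finset V) := by rw [← hS]; simp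
    simp only [mem_insert, mem_singleton] at hu' hv' hx' hy' hxmem hymem
    -- u' cannot be x or y
    have hu'uv : u' = u ∨ u' = v := by
      rcases hu' with h|h|h|h
      · exact Or.inl h
      · exact Or.inr h
      · -- u' = x : then y ∈ {v', x', y'} and u' adjacent to all of them
        exfalso
        have hyne : y ≠ u' := fun hh => (hlt.ne) (congrArg φ (h ▸ hh)).symm
        have hadjy : G.Adj u' y := by
          rcases hymem with h'|h'|h'|h'
          · exact absurd h' hyne
          · rw [h']; exact hA'
          · rw [h']; exact hux'
          · rw [h']; exact huy'
        rw [h] at hadjy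
        exact hxy hadjy
      · -- u' = y : then x ∈ {v', x', y'} and u' adjacent to all
        exfalso
        have hxne : x ≠ u' := fun hh => (hlt.ne) (congrArg φ (h ▸ hh))
        have hadjx : G.Adj u' x := by
          rcases hxmem with h'|h'|h'|h'
          · exact absurd h' hxne
          · rw [h']; exact hA'
          · rw [h']; exact hux'
          · rw [h']; exact huy'
        rw [h] at hadjx
        exact hxy hadjx.symm
    have hv'uv : v' = u ∨ v' = v := by
      rcases hv' with h|h|h|h
      · exact Or.inl h
      · exact Or.inr h
      · exfalso
        have hyne : y ≠ v' := fun hh => (hlt.ne) (congrArg φ (h ▸ hh)).symm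
        have hadjy : G.Adj v' y := by
          rcases hymem with h'|h'|h'|h'
          · rw [h']; exact hA'.symm
          · exact absurd h' hyne
          · rw [h']; exact hvx'
          · rw [h']; exact hvy'
        rw [h] at hadjy
        exact hxy hadjy
      · exfalso
        have hxne : x ≠ v' := fun hh => (hlt.ne) (congrArg φ (h ▸ hh))
        have hadjx : G.Adj v' x := by
          rcases hxmem with h'|h'|h'|h'
          · rw [h']; exact hA'.symm
          · exact absurd h' hxne
          · rw [h']; exact hvx'
          · rw [h']; exact hvy'
        rw [h] at hadjx
        exact hxy hadjx.symm
    have hne' : u' ≠ v' := hA'.ne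
    have heuv : u' = u ∧ v' = v := by
      rcases hu'uv with h|h <;> rcases hv'uv with h'|h'
      · exact absurd (h.trans h'.symm) hne'
      · exact ⟨h, h'⟩
      · -- u' = v, v' = u : bit contradiction
        exfalso
        rw [h, h'] at hbit
        rcases lt_or_gt_of_ne hcuv with hlt2|hlt2
        · simp [hlt2, asymm hlt2] at hbit
        · simp [hlt2, asymm hlt2] at hbit
      · exact absurd (h.trans h'.symm) hne'
    obtain ⟨heu, hev⟩ := heuv
    have hpu : φ u = φ u' := by rw [heu]
    have hpv : φ v = φ v' := by rw [hev]
    have hx'' : x' = x ∨ x' = y := by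
      rcases hx' with h|h|h|h
      · exact absurd ((congrArg φ h).trans hpu) hcxu'
      · exact absurd ((congrArg φ h).trans hpv) hcxv'
      · exact Or.inl h
      · exact Or.inr h
    have hy'' : y' = x ∨ y' = y := by
      rcases hy' with h|h|h|h
      · exact absurd ((congrArg φ h).trans hpu) hcyu'
      · exact absurd ((congrArg φ h).trans hpv) hcyv'
      · exact Or.inl h
      · exact Or.inr h
    have hex : x' = x ∧ y' = y := by
      rcases hx'' with h1|h1 <;> rcases hy'' with h2|h2
      · rw [h1, h2] at hlt'; exact absurd hlt' (lt_irrefl _)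
      · exact ⟨h1, h2⟩
      · rw [h1, h2] at hlt'; exact absurd hlt' (lt_asymm hlt)
      · rw [h1, h2] at hlt'; exact absurd hlt' (lt_irrefl _)
    simp [Prod.ext_iff, heu, hev, hex.1, hex.2]
  · -- surjective
    rintro ⟨S, bit⟩ hb
    simp only [Finset.coe_product, Set.mem_prod, Finset.mem_coe, mem_filter,
      Finset.mem_powersetCard_univ, mem_univ, true_and, and_true] at hb
    obtain ⟨hS4, ⟨a, b, c, d, hS, hdia⟩, himg⟩ := hb
    have hinj : Set.InjOn φ ↑S := Finset.card_image_iff.mp (himg.trans hS4.symm)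
    obtain ⟨hab, hac, had, hbc, hbd, hcd, hAab, hAac, hAad, hAbc, hAbd, hnAcd⟩ := hdia
    have ha : a ∈ S := by rw [hS]; simp
    have hbm : b ∈ S := by rw [hS]; simp
    have hc : c ∈ S := by rw [hS]; simp
    have hd : d ∈ S := by rw [hS]; simp
    have hφab : φ a ≠ φ b := hinj.ne ha hbm hab
    have hφcd : φ c ≠ φ d := hinj.ne hc hd hcd
    -- choose x y among {c, d} ordered by colour
    obtain ⟨x, y, hdia1, hxlt, hset1⟩ :
        ∃ x y, IsDiamond G a b x y ∧ φ x < φ y ∧ ({a, b, x, y} : Finset V) = S := by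
      rcases lt_or_gt_of_ne hφcd with h|h
      · exact ⟨c, d, ⟨hab, hac, had, hbc, hbd, hcd, hAab, hAac, hAad, hAbc, hAbd, hnAcd⟩,
          h, hS.symm⟩
      · exact ⟨d, c, IsDiamond.swap_cd
          ⟨hab, hac, had, hbc, hbd, hcd, hAab, hAac, hAad, hAbc, hAbd, hnAcd⟩, h,
          by rw [hS, Finset.pair_comm d c]⟩
    -- choose u v among {a, b} matching the bit
    obtain ⟨u, v, hdia2, hbit, hset2⟩ :
        ∃ u v, IsDiamond G u v x y ∧ decide (φ u < φ v) = bit ∧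
          ({u, v, x, y} : Finset V) = S := by
      cases bit
      · rcases lt_or_gt_of_ne hφab with h|h
        · exact ⟨b, a, hdia1.swap_ab, by simp [asymm h], by rw [← hset1, Finset.insert_comm]⟩
        · exact ⟨a, b, hdia1, by simp [asymm h], hset1⟩
      · rcases lt_or_gt_of_ne hφab with h|h
        · exact ⟨a, b, hdia1, by simp [h], hset1⟩
        · exact ⟨b, a, hdia1.swap_ab, by simp [h], by rw [← hset1, Finset.insert_comm]⟩
    obtain ⟨huv, hux, huy, hvx, hvy, hxy, hAuv, hAux, hAuy, hAvx, hAvy, hnAxy⟩ := hdia2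
    have hu : u ∈ S := by rw [← hset2]; simp
    have hv : v ∈ S := by rw [← hset2]; simp
    have hxm : x ∈ S := by rw [← hset2]; simp
    have hym : y ∈ S := by rw [← hset2]; simp
    refine ⟨((u, v), (x, y)), ?_, ?_⟩
    · simp only [Finset.mem_coe, mem_filter, mem_product, mem_univ, true_and]
      exact ⟨⟨⟨hAuv, hinj.ne hu hv huv⟩, hAux, hAvx, hAuy, hAvy,
        hinj.ne hxm hu (Ne.symm hux), hinj.ne hxm hv (Ne.symm hvx),
        hinj.ne hym hu (Ne.symm huy), hinj.ne hym hv (Ne.symm hvy), hxlt⟩, hnAxy⟩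
    · simp only [Prod.mk.injEq]
      exact ⟨hset2, hbit⟩


open Classical in
/-- The sum of `y_e` over all edges whose endpoints have distinct colors equals
`6 s + t`, where `s` is the number of colorful `K₄`'s and `t` is the number of
colorful induced diamonds. -/
theorem stmt7 (G : SimpleGraph V) [DecidableRel G.Adj] (φ : V → Fin 4)
    (s t : ℕ)
    (hs : s = ((Finset.univ.powersetCard 4).filter
        (fun S : Finset V => G.IsClique (S : Set V) ∧ (S.image φ).card = 4)).card)
    (ht : t = ((Finset.univ.powersetCard 4).filter
        (fun S : Finset V => (∃ a b c d, S = {a, b, c, d} ∧ IsDiamond G a b c d) ∧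
          (S.image φ).card = 4)).card) :
    ∑ e ∈ G.edgeFinset.filter (fun e => ¬ (Sym2.map φ e).IsDiag), yedge G φ e
      = 6 * s + t := by
  have key := sum_edges G φ
  have h1 : ∑ p ∈ (Finset.univ ×ˢ Finset.univ).filter
        (fun p : V × V => G.Adj p.1 p.2 ∧ φ p.1 ≠ φ p.2), ypair G φ p.1 p.2
      = ∑ p ∈ (Finset.univ ×ˢ Finset.univ).filter
        (fun p : V × V => G.Adj p.1 p.2 ∧ φ p.1 ≠ φ p.2),
        ((Finset.univ ×ˢ Finset.univ).filter fun w : V × V =>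
          G.Adj p.1 w.1 ∧ G.Adj p.2 w.1 ∧ G.Adj p.1 w.2 ∧ G.Adj p.2 w.2 ∧
          φ w.1 ≠ φ p.1 ∧ φ w.1 ≠ φ p.2 ∧ φ w.2 ≠ φ p.1 ∧ φ w.2 ≠ φ p.2 ∧
          φ w.1 < φ w.2).card := by
    refine Finset.sum_congr rfl fun p hp => ?_
    simp only [Finset.mem_filter, Finset.mem_product, Finset.mem_univ, true_and] at hp
    exact ypair_eq_card G φ p.1 p.2 hp.2
  have h2 := sum_card_eq G φ
  have h3 := Finset.card_filter_add_card_filter_not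
    (s := ((Finset.univ ×ˢ Finset.univ) ×ˢ (Finset.univ ×ˢ Finset.univ)).filter
        (fun q : (V × V) × (V × V) =>
          (G.Adj q.1.1 q.1.2 ∧ φ q.1.1 ≠ φ q.1.2) ∧
            (G.Adj q.1.1 q.2.1 ∧ G.Adj q.1.2 q.2.1 ∧ G.Adj q.1.1 q.2.2 ∧ G.Adj q.1.2 q.2.2 ∧
             φ q.2.1 ≠ φ q.1.1 ∧ φ q.2.1 ≠ φ q.1.2 ∧ φ q.2.2 ≠ φ q.1.1 ∧ φ q.2.2 ≠ φ q.1.2 ∧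
             φ q.2.1 < φ q.2.2)))
    (p := fun q => G.Adj q.2.1 q.2.2)
  rw [Finset.filter_filter, Finset.filter_filter] at h3
  rw [K4_count G φ] at h3
  rw [dia_count G φ] at h3
  rw [hs, ht]
  omega
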